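/- Let k ≥ 2 and m ≥ 1 be integers and n = km. Let X be an n×m Latin hypercube design and O an n×m matrix each of whose rows is a permutation of {1,...,m}, and suppose (X,O) is marginally coupled. Then the row indices {1,...,n} can be partitioned into k blocks of size m such that, within each block, every column of O contains each of the symbols 1,...,m exactly once; that is, up to a row permutation, O is the row juxtaposition of k Latin squares of order m. -/
import Mathlib


/-- `(X, O)` with `n = k·m` rows is marginally coupled if for every column `j` of `O`,
every level `c ∈ {1,…,m}`, and every column `j'` of `X`, the level `c` appears in
column `j` of `O` exactly `k` times and the collapsed values `⌊(X(i,j') - 1)/m⌋` over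
those `k` rows are exactly `0, 1, …, k-1`, each occurring once. -/
def MargCoupled (k m : ℕ) (X O : Fin (k * m) → Fin m → ℕ) : Prop :=
  ∀ j j' : Fin m, ∀ c ∈ Finset.Icc 1 m,
    (Finset.univ.filter fun i => O i j = c).card = k ∧
    (Finset.univ.filter fun i => O i j = c).image (fun i => (X i j' - 1) / m)
      = Finset.range k

/-- let `n = k·m` with `k ≥ 2`, `m ≥ 1`, `X` an `n × m` Latin hypercube
design (each column a permutation of `{1,…,n}`), `O` an `n × m` matrix each of whose
rows is a permutation of `{1,…,m}`, and suppose `(X, O)` is marginally coupled.  Then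
the rows can be partitioned into `k` blocks of size `m` such that within each block
every column of `O` contains each symbol of `{1,…,m}` exactly once (i.e. up to a row
permutation, `O` is the row juxtaposition of `k` Latin squares of order `m`). -/
theorem stmt_14 (k m : ℕ) (hk : 2 ≤ k) (hm : 1 ≤ m)
    (X O : Fin (k * m) → Fin m → ℕ)
    (hX : ∀ j : Fin m, Finset.image (fun i => X i j) Finset.univ = Finset.Icc 1 (k * m))
    (hO : ∀ i : Fin (k * m), Finset.image (fun j => O i j) Finset.univ = Finset.Icc 1 m)
    (hMC : MargCoupled k m X O) :
    ∃ B : Fin (k * m) → Fin k, ∀ t : Fin k,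
      (Finset.univ.filter fun i => B i = t).card = m ∧
      ∀ j : Fin m,
        (Finset.univ.filter fun i => B i = t).image (fun i => O i j) = Finset.Icc 1 m := by
  have hm0 : 0 < m := hm
  have hj0 : (0:ℕ) < m := hm0
  set j₀ : Fin m := ⟨0, hj0⟩ with hj₀
  have hXmem : ∀ i, X i j₀ ∈ Finset.Icc 1 (k*m) := by
    intro i; rw [← hX j₀]; exact Finset.mem_image_of_mem _ (Finset.mem_univ i)
  have hBlt : ∀ i, (X i j₀ - 1) / m < k := by
    intro i
    have h := hXmem i
    rw [Finset.mem_Icc] at h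
    rw [Nat.div_lt_iff_lt_mul hm0]
    omega
  refine ⟨fun i => ⟨(X i j₀ - 1)/m, hBlt i⟩, ?_⟩
  set B : Fin (k*m) → Fin k := fun i => ⟨(X i j₀ - 1)/m, hBlt i⟩ with hB
  have key : ∀ (t : Fin k) (j : Fin m) (c : ℕ), c ∈ Finset.Icc 1 m →
      ∃ i, B i = t ∧ O i j = c := by
    intro t j c hc
    obtain ⟨_, himg⟩ := hMC j j₀ c hc
    have ht : (t : ℕ) ∈ Finset.range k := Finset.mem_range.mpr t.isLt
    rw [← himg] at ht
    obtain ⟨i, hi, hval⟩ := Finset.mem_image.mp ht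
    rw [Finset.mem_filter] at hi
    exact ⟨i, Fin.ext hval, hi.2⟩
  have himage : ∀ (t : Fin k) (j : Fin m),
      (Finset.univ.filter fun i => B i = t).image (fun i => O i j) = Finset.Icc 1 m := by
    intro t j
    apply Finset.Subset.antisymm
    · intro c hc
      obtain ⟨i, hi, rfl⟩ := Finset.mem_image.mp hc
      rw [← hO i]
      exact Finset.mem_image_of_mem _ (Finset.mem_univ j)
    · intro c hc
      obtain ⟨i, hBi, hOi⟩ := key t j c hc
      exact Finset.mem_image.mpr ⟨i, Finset.mem_filter.mpr ⟨Finset.mem_univ i, hBi⟩, hOi⟩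
  have hge : ∀ t : Fin k, m ≤ (Finset.univ.filter fun i => B i = t).card := by
    intro t
    calc m = (Finset.Icc 1 m).card := by simp
    _ = ((Finset.univ.filter fun i => B i = t).image (fun i => O i j₀)).card := by
          rw [himage t j₀]
    _ ≤ (Finset.univ.filter fun i => B i = t).card := Finset.card_image_le
  have hsum : ∑ t : Fin k, (Finset.univ.filter fun i => B i = t).card = k * m := by
    rw [← Finset.card_eq_sum_card_fiberwise (f := B) (s := Finset.univ) (t := Finset.univ)
      (fun x _ => Finset.mem_univ _)]
    simp
  have hcard : ∀ t : Fin k, (Finset.univ.filter fun i => B i = t).card = m := by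
    have heq : ∑ t : Fin k, (m : ℕ) = ∑ t : Fin k, (Finset.univ.filter fun i => B i = t).card := by
      rw [hsum]; simp [mul_comm]
    intro t
    have := (Finset.sum_eq_sum_iff_of_le (fun i _ => hge i)).mp heq t (Finset.mem_univ t)
    omega
  exact fun t => ⟨hcard t, fun j => himage t j⟩
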